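/- Let b, c > 0 and define a sequence of d×d positive definite real matrices by D₁ = bI + x₁x₁ᵀ and D_t = (D_{t-1}⁻¹ + c⁻¹I)⁻¹ + x_t x_tᵀ, where each x_t ∈ ℝ^d satisfies ‖x_t‖² ≤ X². Then for all t ≥ 1, every eigenvalue of D_t is at most max{(3X² + √(X⁴ + 4X²c))/2, b + X²}. -/

import Mathlib

open Matrix

namespace StmtAux2471

variable {n : ℕ}

lemma psd_smul {A : Matrix (Fin n) (Fin n) ℝ} (hA : A.PosSemidef) {a : ℝ} (ha : 0 ≤ a) :
    (a • A).PosSemidef := by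
  refine posSemidef_iff_dotProduct_mulVec.mpr ⟨?_, ?_⟩
  · show (a • A)ᴴ = a • A
    rw [conjTranspose_smul, hA.1.eq, star_trivial]
  · intro y
    rw [smul_mulVec, dotProduct_smul, smul_eq_mul]
    exact mul_nonneg ha (hA.dotProduct_mulVec_nonneg y)

lemma pd_smul_one {a : ℝ} (ha : 0 < a) : (a • (1 : Matrix (Fin n) (Fin n) ℝ)).PosDef := by
  refine posDef_iff_dotProduct_mulVec.mpr ⟨?_, ?_⟩
  · show (a • (1 : Matrix (Fin n) (Fin n) ℝ))ᴴ = _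
    rw [conjTranspose_smul, conjTranspose_one, star_trivial]
  · intro y hy
    have h1 := (Matrix.PosDef.one (n := Fin n) (R := ℝ)).dotProduct_mulVec_pos hy
    rw [smul_mulVec, dotProduct_smul, smul_eq_mul]
    exact mul_pos ha h1

open scoped MatrixOrder in
lemma exists_S {A : Matrix (Fin n) (Fin n) ℝ} (hA : A.PosDef) :
    ∃ S : Matrix (Fin n) (Fin n) ℝ, Sᴴ = S ∧ S * S = A⁻¹ ∧ S * A * S = 1 := by
  have hAinv : (A⁻¹).PosDef := hA.inv
  have hS := hAinv.posSemidef
  refine ⟨CFC.sqrt (A⁻¹), (Matrix.nonneg_iff_posSemidef.mp (CFC.sqrt_nonneg _)).isHermitian,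
    CFC.sqrt_mul_sqrt_self _ hS.nonneg, ?_⟩
  set S := CFC.sqrt (A⁻¹) with hSdef
  have hSS : S * S = A⁻¹ := CFC.sqrt_mul_sqrt_self _ hS.nonneg
  have hdetA : IsUnit A.det := hA.det_pos.ne'.isUnit
  have hdetS : IsUnit S.det := by
    have h1 : S.det * S.det = A⁻¹.det := by rw [← det_mul, hSS]
    have h2 : A⁻¹.det ≠ 0 := hAinv.det_pos.ne'
    have : S.det ≠ 0 := fun h => h2 (by rw [← h1, h, zero_mul])
    exact this.isUnit
  have hA' : S⁻¹ * S⁻¹ = A := by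
    rw [← Matrix.mul_inv_rev, hSS, Matrix.nonsing_inv_nonsing_inv A hdetA]
  calc S * A * S = S * (S⁻¹ * S⁻¹) * S := by rw [hA']
    _ = (S * S⁻¹) * (S⁻¹ * S) := by simp only [Matrix.mul_assoc]
    _ = 1 := by rw [Matrix.mul_nonsing_inv _ hdetS, Matrix.nonsing_inv_mul _ hdetS, one_mul]

lemma key1 {A : Matrix (Fin n) (Fin n) ℝ} (hA : A.PosDef) {α : ℝ} (hα : 0 < α)
    (h : (α • (1 : Matrix (Fin n) (Fin n) ℝ) - A).PosSemidef) :
    (A⁻¹ - α⁻¹ • (1 : Matrix (Fin n) (Fin n) ℝ)).PosSemidef := by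
  obtain ⟨S, hSh, hSS, hASA⟩ := exists_S hA
  have hconj : (S * (α • (1 : Matrix (Fin n) (Fin n) ℝ) - A) * S).PosSemidef := by
    have := h.mul_mul_conjTranspose_same S
    rwa [hSh] at this
  have heq : S * (α • (1 : Matrix (Fin n) (Fin n) ℝ) - A) * S = α • A⁻¹ - 1 := by
    rw [Matrix.mul_sub, Matrix.sub_mul, Matrix.mul_smul, Matrix.mul_one, Matrix.smul_mul,
      hSS, hASA]
  have hfin : A⁻¹ - α⁻¹ • (1 : Matrix (Fin n) (Fin n) ℝ) = α⁻¹ • (α • A⁻¹ - 1) := by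
    rw [smul_sub, smul_smul, inv_mul_cancel₀ hα.ne', one_smul]
  rw [hfin]
  exact psd_smul (heq ▸ hconj) (inv_nonneg.mpr hα.le)

lemma key2 {A : Matrix (Fin n) (Fin n) ℝ} (hA : A.PosDef) {α : ℝ} (hα : 0 < α)
    (h : (A - α • (1 : Matrix (Fin n) (Fin n) ℝ)).PosSemidef) :
    (α⁻¹ • (1 : Matrix (Fin n) (Fin n) ℝ) - A⁻¹).PosSemidef := by
  obtain ⟨S, hSh, hSS, hASA⟩ := exists_S hA
  have hconj : (S * (A - α • (1 : Matrix (Fin n) (Fin n) ℝ)) * S).PosSemidef := by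
    have := h.mul_mul_conjTranspose_same S
    rwa [hSh] at this
  have heq : S * (A - α • (1 : Matrix (Fin n) (Fin n) ℝ)) * S = 1 - α • A⁻¹ := by
    rw [Matrix.mul_sub, Matrix.sub_mul, Matrix.mul_smul, Matrix.mul_one, Matrix.smul_mul,
      hSS, hASA]
  have hfin : α⁻¹ • (1 : Matrix (Fin n) (Fin n) ℝ) - A⁻¹ = α⁻¹ • (1 - α • A⁻¹) := by
    rw [smul_sub, smul_smul, inv_mul_cancel₀ hα.ne', one_smul]
  rw [hfin]
  exact psd_smul (heq ▸ hconj) (inv_nonneg.mpr hα.le)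

lemma psd_vvT (v : Fin n → ℝ) {X2 : ℝ} (hv : ∑ i, v i ^ 2 ≤ X2) :
    (X2 • (1 : Matrix (Fin n) (Fin n) ℝ) - vecMulVec v v).PosSemidef := by
  have hmv : ∀ y : Fin n → ℝ, vecMulVec v v *ᵥ y = (v ⬝ᵥ y) • v := by
    intro y
    ext i
    simp only [vecMulVec_apply, mulVec, dotProduct, Pi.smul_apply, smul_eq_mul,
      Finset.sum_mul]
    exact Finset.sum_congr rfl fun j _ => by ring
  refine posSemidef_iff_dotProduct_mulVec.mpr ⟨?_, ?_⟩
  · show _ᴴ = _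
    rw [conjTranspose_sub, conjTranspose_smul, conjTranspose_one, star_trivial]
    congr 1
    ext i j
    simp [conjTranspose_apply, vecMulVec_apply, mul_comm]
  · intro y
    have hstar : star y = y := by ext j; simp
    rw [hstar, sub_mulVec, smul_mulVec, one_mulVec, hmv, dotProduct_sub,
      dotProduct_smul, dotProduct_smul, smul_eq_mul, smul_eq_mul, dotProduct_comm y v]
    have hcs : (∑ i, v i * y i) ^ 2 ≤ (∑ i, v i ^ 2) * ∑ i, y i ^ 2 :=
      Finset.sum_mul_sq_le_sq_mul_sq Finset.univ v y
    have hy2 : (0:ℝ) ≤ ∑ i, y i ^ 2 := Finset.sum_nonneg fun i _ => sq_nonneg _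
    have hdd : y ⬝ᵥ y = ∑ i, y i ^ 2 := by simp [dotProduct, sq]
    have hvy : v ⬝ᵥ y = ∑ i, v i * y i := rfl
    rw [hdd, hvy]
    nlinarith [mul_le_mul_of_nonneg_right hv hy2]

lemma eig_le {A : Matrix (Fin n) (Fin n) ℝ} (hA : A.IsHermitian) {M : ℝ}
    (hpsd : (M • (1 : Matrix (Fin n) (Fin n) ℝ) - A).PosSemidef) (i : Fin n) :
    hA.eigenvalues i ≤ M := by
  set v : Fin n → ℝ := ⇑(hA.eigenvectorBasis i) with hv
  have hmul : A *ᵥ v = hA.eigenvalues i • v := hA.mulVec_eigenvectorBasis i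
  have hvne : v ≠ 0 := by
    have h1 : ‖hA.eigenvectorBasis i‖ = 1 := hA.eigenvectorBasis.orthonormal.1 i
    intro h0
    have h2 : hA.eigenvectorBasis i = 0 := by
      ext j
      exact congrFun h0 j
    rw [h2, norm_zero] at h1
    norm_num at h1
  have hdot : 0 < v ⬝ᵥ v := by
    obtain ⟨j, hj⟩ := Function.ne_iff.mp hvne
    have : (0:ℝ) < ∑ k, v k * v k :=
      Finset.sum_pos' (fun k _ => mul_self_nonneg _)
        ⟨j, Finset.mem_univ j, mul_self_pos.mpr hj⟩
    exact this
  have h0 := hpsd.dotProduct_mulVec_nonneg v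
  have hstar : star v = v := by ext j; simp
  rw [hstar, sub_mulVec, smul_mulVec, one_mulVec, hmul, dotProduct_sub,
    dotProduct_smul, dotProduct_smul, smul_eq_mul, smul_eq_mul] at h0
  nlinarith [hdot]

end StmtAux2471

open StmtAux2471 in
/-- Eigenvalue bound for the LASER covariance recursion:
D₁ = bI + x₁x₁ᵀ, D_t = (D_{t-1}⁻¹ + c⁻¹I)⁻¹ + x_t x_tᵀ with ‖x_t‖² ≤ X²
implies every eigenvalue of D_t is at most
max{(3X² + √(X⁴ + 4X²c))/2, b + X²}. -/
theorem stmt_2 (d : ℕ) (b c X : ℝ) (hb : 0 < b) (hc : 0 < c)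
    (x : ℕ → Fin d → ℝ) (hx : ∀ t, ∑ i, (x t i) ^ 2 ≤ X ^ 2)
    (D : ℕ → Matrix (Fin d) (Fin d) ℝ)
    (hD1 : D 1 = b • (1 : Matrix (Fin d) (Fin d) ℝ) + vecMulVec (x 1) (x 1))
    (hrec : ∀ t, 2 ≤ t →
      D t = ((D (t - 1))⁻¹ + c⁻¹ • (1 : Matrix (Fin d) (Fin d) ℝ))⁻¹
              + vecMulVec (x t) (x t))
    (hpd : ∀ t, 1 ≤ t → (D t).PosDef) :
    ∀ t, 1 ≤ t → ∀ (h : (D t).IsHermitian) (i : Fin d),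
      h.eigenvalues i ≤
        max ((3 * X ^ 2 + Real.sqrt (X ^ 4 + 4 * X ^ 2 * c)) / 2) (b + X ^ 2) := by
  set M : ℝ := max ((3 * X ^ 2 + Real.sqrt (X ^ 4 + 4 * X ^ 2 * c)) / 2) (b + X ^ 2) with hMdef
  have hX2 : (0:ℝ) ≤ X ^ 2 := sq_nonneg X
  have hM_ge : b + X ^ 2 ≤ M := le_max_right _ _
  have hMpos : 0 < M := lt_of_lt_of_le (by linarith) hM_ge
  have hγ : (M⁻¹ + c⁻¹)⁻¹ + X ^ 2 ≤ M := by
    set s := Real.sqrt (X ^ 4 + 4 * X ^ 2 * c) with hs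
    have hs0 : 0 ≤ s := Real.sqrt_nonneg _
    have hs2 : s ^ 2 = X ^ 4 + 4 * X ^ 2 * c := Real.sq_sqrt (by positivity)
    have hMr : (3 * X ^ 2 + s) / 2 ≤ M := le_max_left _ _
    have hquad : X ^ 2 * M + X ^ 2 * c ≤ M ^ 2 := by
      nlinarith [sq_nonneg (2 * M - X ^ 2 - s)]
    have hMC : 0 < M + c := by linarith
    have heq : (M⁻¹ + c⁻¹)⁻¹ = M * c / (M + c) := by
      rw [inv_add_inv hMpos.ne' hc.ne', inv_div]
    rw [heq, div_add' _ _ _ hMC.ne', div_le_iff₀ hMC]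
    nlinarith [hquad]
  have hγpos : 0 < M⁻¹ + c⁻¹ := by positivity
  have main : ∀ t, 1 ≤ t → (M • (1 : Matrix (Fin d) (Fin d) ℝ) - D t).PosSemidef := by
    intro t ht
    induction t, ht using Nat.le_induction with
    | base =>
      rw [hD1]
      have h1 := psd_vvT (x 1) (hx 1)
      have h2 : ((M - b - X ^ 2) • (1 : Matrix (Fin d) (Fin d) ℝ)).PosSemidef :=
        psd_smul Matrix.PosSemidef.one (by linarith)
      have h3 := h2.add h1
      have h4 : M • (1 : Matrix (Fin d) (Fin d) ℝ)
          - (b • (1 : Matrix (Fin d) (Fin d) ℝ) + vecMulVec (x 1) (x 1))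
          = (M - b - X ^ 2) • (1 : Matrix (Fin d) (Fin d) ℝ)
            + (X ^ 2 • (1 : Matrix (Fin d) (Fin d) ℝ) - vecMulVec (x 1) (x 1)) := by
        module
      rw [h4]
      exact h3
    | succ t ht ih =>
      have hDt : (D t).PosDef := hpd t ht
      have h1 : ((D t)⁻¹ - M⁻¹ • (1 : Matrix (Fin d) (Fin d) ℝ)).PosSemidef :=
        key1 hDt hMpos ih
      set E := (D t)⁻¹ + c⁻¹ • (1 : Matrix (Fin d) (Fin d) ℝ) with hE
      have hEpd : E.PosDef := hDt.inv.add (pd_smul_one (by positivity))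
      have h2 : (E - (M⁻¹ + c⁻¹) • (1 : Matrix (Fin d) (Fin d) ℝ)).PosSemidef := by
        have heq2 : E - (M⁻¹ + c⁻¹) • (1 : Matrix (Fin d) (Fin d) ℝ)
            = (D t)⁻¹ - M⁻¹ • (1 : Matrix (Fin d) (Fin d) ℝ) := by
          rw [hE]; module
        rw [heq2]
        exact h1
      have h3 : ((M⁻¹ + c⁻¹)⁻¹ • (1 : Matrix (Fin d) (Fin d) ℝ) - E⁻¹).PosSemidef :=
        key2 hEpd hγpos h2
      have h4 := psd_vvT (x (t + 1)) (hx (t + 1))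
      have h5 : ((M - (M⁻¹ + c⁻¹)⁻¹ - X ^ 2) • (1 : Matrix (Fin d) (Fin d) ℝ)).PosSemidef :=
        psd_smul Matrix.PosSemidef.one (by linarith)
      have hDrec : D (t + 1) = E⁻¹ + vecMulVec (x (t + 1)) (x (t + 1)) := by
        have h6 := hrec (t + 1) (by omega)
        simpa [Nat.add_sub_cancel] using h6
      rw [hDrec]
      have h7 := (h5.add h3).add h4
      have h8 : M • (1 : Matrix (Fin d) (Fin d) ℝ)
          - (E⁻¹ + vecMulVec (x (t + 1)) (x (t + 1)))
          = (M - (M⁻¹ + c⁻¹)⁻¹ - X ^ 2) • (1 : Matrix (Fin d) (Fin d) ℝ)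
            + ((M⁻¹ + c⁻¹)⁻¹ • (1 : Matrix (Fin d) (Fin d) ℝ) - E⁻¹)
            + (X ^ 2 • (1 : Matrix (Fin d) (Fin d) ℝ)
               - vecMulVec (x (t + 1)) (x (t + 1))) := by
        module
      rw [h8]
      exact h7
  intro t ht h i
  exact eig_le h (main t ht) i
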